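/- The function t ↦ φ(t) := √2 · Γ((t+1)/2)/Γ(t/2) is strictly increasing on (0, ∞); consequently if n₀ ≤ n then b_{n₀}/b_n ≤ √(n₀/n) is implied by the stronger inequality φ(t) ≤ √t ≤ φ(t+1) for all t > 0. -/

import Mathlib

noncomputable def phiAux (t : ℝ) : ℝ :=
  Real.sqrt 2 * Real.Gamma ((t + 1) / 2) / Real.Gamma (t / 2)

lemma phiAux_pos {t : ℝ} (ht : 0 < t) : 0 < phiAux t := by
  unfold phiAux
  have h1 : 0 < Real.Gamma ((t + 1) / 2) := Real.Gamma_pos_of_pos (by linarith)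
  have h2 : 0 < Real.Gamma (t / 2) := Real.Gamma_pos_of_pos (by linarith)
  positivity

lemma phiAux_id {t : ℝ} (ht : 0 < t) : phiAux t * phiAux (t + 1) = t := by
  unfold phiAux
  have h2 : 0 < Real.Gamma (t / 2) := Real.Gamma_pos_of_pos (by linarith)
  have h1 : 0 < Real.Gamma ((t + 1) / 2) := Real.Gamma_pos_of_pos (by linarith)
  have hadd : Real.Gamma ((t + 1 + 1) / 2) = (t / 2) * Real.Gamma (t / 2) := by
    rw [show (t + 1 + 1) / 2 = t / 2 + 1 by ring, Real.Gamma_add_one (by positivity)]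
  rw [hadd]
  have hs : Real.sqrt 2 * Real.sqrt 2 = 2 := Real.mul_self_sqrt (by norm_num)
  field_simp
  linear_combination hs

lemma phiAux_mono : MonotoneOn phiAux (Set.Ioi 0) := by
  intro x hx y hy hxy
  rcases eq_or_lt_of_le hxy with rfl | hlt
  · exact le_refl _
  simp only [Set.mem_Ioi] at hx hy
  set g : ℝ → ℝ := Real.log ∘ Real.Gamma with hg
  have hC : ConvexOn ℝ (Set.Ioi 0) g := Real.convexOn_log_Gamma
  set a := x / 2 with ha'
  set b := (x + 1) / 2 with hb'
  set c := y / 2 with hc'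
  set d := (y + 1) / 2 with hd'
  have hma : a ∈ Set.Ioi (0:ℝ) := by simp [ha']; linarith
  have hmb : b ∈ Set.Ioi (0:ℝ) := by simp [hb']; linarith
  have hmc : c ∈ Set.Ioi (0:ℝ) := by simp [hc']; linarith
  have hmd : d ∈ Set.Ioi (0:ℝ) := by simp [hd']; linarith
  have hab : a < b := by simp [ha', hb']; linarith
  have hcd : c < d := by simp [hc', hd']; linarith
  have hac : a < c := by simp [ha', hc']; linarith
  have hbd : b < d := by simp [hb', hd']; linarith
  have had : a < d := by simp [ha', hd']; linarith
  have h1 : (g b - g a) / (b - a) ≤ (g d - g a) / (d - a) :=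
    hC.secant_mono hma hmb hmd hab.ne' had.ne' hbd.le
  have h2 : (g a - g d) / (a - d) ≤ (g c - g d) / (c - d) :=
    hC.secant_mono hmd hma hmc had.ne hcd.ne hac.le
  have hmid : (g d - g a) / (d - a) = (g a - g d) / (a - d) := by
    rw [← neg_sub (g d) (g a), ← neg_sub d a, neg_div_neg_eq]
  have hend : (g c - g d) / (c - d) = (g d - g c) / (d - c) := by
    rw [← neg_sub (g c) (g d), ← neg_sub c d, neg_div_neg_eq]
  have hchain : (g b - g a) / (b - a) ≤ (g d - g c) / (d - c) := by
    rw [← hend]; exact h1.trans (hmid ▸ h2)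
  have hba : b - a = 1 / 2 := by simp [ha', hb']; ring
  have hdc : d - c = 1 / 2 := by simp [hc', hd']; ring
  rw [hba, hdc] at hchain
  have hdiff : g b - g a ≤ g d - g c := by
    have := (div_le_div_iff_of_pos_right (c := (1:ℝ)/2) (by norm_num)).mp hchain
    linarith
  -- translate back to phiAux
  have hGa : 0 < Real.Gamma a := Real.Gamma_pos_of_pos hma
  have hGb : 0 < Real.Gamma b := Real.Gamma_pos_of_pos hmb
  have hGc : 0 < Real.Gamma c := Real.Gamma_pos_of_pos hmc
  have hGd : 0 < Real.Gamma d := Real.Gamma_pos_of_pos hmd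
  have hratio : Real.Gamma b / Real.Gamma a ≤ Real.Gamma d / Real.Gamma c := by
    have hlog : Real.log (Real.Gamma b / Real.Gamma a) ≤
        Real.log (Real.Gamma d / Real.Gamma c) := by
      rw [Real.log_div hGb.ne' hGa.ne', Real.log_div hGd.ne' hGc.ne']
      exact hdiff
    exact (Real.log_le_log_iff (by positivity) (by positivity)).mp hlog
  unfold phiAux
  have hs2 : 0 < Real.sqrt 2 := Real.sqrt_pos.mpr (by norm_num)
  calc Real.sqrt 2 * Real.Gamma ((x + 1) / 2) / Real.Gamma (x / 2)
      = Real.sqrt 2 * (Real.Gamma b / Real.Gamma a) := by rw [ha', hb']; ring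
    _ ≤ Real.sqrt 2 * (Real.Gamma d / Real.Gamma c) := by
        exact mul_le_mul_of_nonneg_left hratio hs2.le
    _ = Real.sqrt 2 * Real.Gamma ((y + 1) / 2) / Real.Gamma (y / 2) := by rw [hc', hd']; ring

lemma phiAux_strictMono : StrictMonoOn phiAux (Set.Ioi 0) := by
  intro x hx y hy hlt
  rcases lt_or_eq_of_le (phiAux_mono hx hy hlt.le) with h | heq
  · exact h
  exfalso
  simp only [Set.mem_Ioi] at hx hy
  have hcpos : 0 < phiAux x := phiAux_pos hx
  have hx1 : phiAux x * phiAux (x + 1) = x := phiAux_id hx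
  have hx2 : phiAux (x + 1) * phiAux (x + 1 + 1) = x + 1 :=
    phiAux_id (t := x + 1) (by linarith)
  have hy1 : phiAux x * phiAux (y + 1) = y := by rw [heq]; exact phiAux_id hy
  have hy2 : phiAux (y + 1) * phiAux (y + 1 + 1) = y + 1 :=
    phiAux_id (t := y + 1) (by linarith)
  have ex : x * phiAux (x + 1 + 1) = phiAux x * (x + 1) := by
    linear_combination phiAux x * hx2 - phiAux (x + 1 + 1) * hx1
  have ey : y * phiAux (y + 1 + 1) = phiAux x * (y + 1) := by
    linear_combination phiAux x * hy2 - phiAux (y + 1 + 1) * hy1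
  have hm : phiAux (x + 1 + 1) ≤ phiAux (y + 1 + 1) :=
    phiAux_mono (by simp only [Set.mem_Ioi]; linarith)
      (by simp only [Set.mem_Ioi]; linarith) (by linarith)
  have hmul := mul_le_mul_of_nonneg_left hm (le_of_lt (mul_pos hx hy))
  nlinarith [hmul, ex, ey, mul_pos hcpos (sub_pos.mpr hlt), hx, hy]

/-- The function `φ(t) = √2 Γ((t+1)/2)/Γ(t/2)` is strictly increasing on `(0, ∞)` and
satisfies `φ(t) ≤ √t ≤ φ(t+1)` for all `t > 0`. -/
theorem phi_strictMono_and_sandwich :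
    StrictMonoOn (fun t : ℝ => Real.sqrt 2 * Real.Gamma ((t + 1) / 2) / Real.Gamma (t / 2))
        (Set.Ioi 0) ∧
      ∀ t : ℝ, 0 < t →
        Real.sqrt 2 * Real.Gamma ((t + 1) / 2) / Real.Gamma (t / 2) ≤ Real.sqrt t ∧
          Real.sqrt t ≤ Real.sqrt 2 * Real.Gamma ((t + 1 + 1) / 2) / Real.Gamma ((t + 1) / 2) := by
  constructor
  · exact phiAux_strictMono
  · intro t ht
    have hmono : phiAux t ≤ phiAux (t + 1) :=
      (phiAux_strictMono (by simpa using ht) (by simp; linarith) (by linarith)).le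
    have hid := phiAux_id ht
    have hp := phiAux_pos ht
    have hp1 := phiAux_pos (t := t + 1) (by linarith)
    constructor
    · show phiAux t ≤ Real.sqrt t
      have hsq : phiAux t ^ 2 ≤ t := by nlinarith
      calc phiAux t = Real.sqrt (phiAux t ^ 2) := (Real.sqrt_sq hp.le).symm
        _ ≤ Real.sqrt t := Real.sqrt_le_sqrt hsq
    · show Real.sqrt t ≤ phiAux (t + 1)
      have hsq : t ≤ phiAux (t + 1) ^ 2 := by nlinarith
      calc Real.sqrt t ≤ Real.sqrt (phiAux (t + 1) ^ 2) := Real.sqrt_le_sqrt hsq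
        _ = phiAux (t + 1) := Real.sqrt_sq hp1.le
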